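/- Let G be a directed forest with n vertices whose trees have roots S, |S| = s. The Two Path mechanism (repeatedly sample two independent random paths from uniform starting vertices; select the first intersection vertex if unmarked, mark all visited vertices of non-intersecting path pairs, return null if intersection is marked) satisfies E[I(selected vertex)] >= 0.09 * n / s, where I(v) is the subtree size of v and the null outcome contributes 0. -/

import Mathlib

open Finset MeasureTheory
open scoped Classical

/-- A directed forest on the vertex type `V`: every vertex has at most one
out-edge, encoded by a parent map whose iterates stabilize (roots are the fixed
points of `parent`, and the edge of a non-root `v` points to `parent v`). -/
structure ParentForest (V : Type*) [Fintype V] where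
  parent : V → V
  stab : ∀ v, ∃ k, parent^[k + 1] v = parent^[k] v

namespace ParentForest

variable {V : Type*} [Fintype V]

/-- The roots of the forest. -/
noncomputable def roots (F : ParentForest V) : Finset V :=
  Finset.univ.filter fun v => F.parent v = v

/-- `F.Anc v u` : `v` is an ancestor of `u` (possibly `v = u`). -/
def Anc (F : ParentForest V) (v u : V) : Prop := ∃ k, F.parent^[k] u = v

/-- `I(v)`: the size of the subtree rooted at `v` (including `v`). -/
noncomputable def subSize (F : ParentForest V) (v : V) : ℕ :=
  (Finset.univ.filter fun u => F.Anc v u).card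

/-- The set of vertices of the (deterministic) random path starting at `x`:
all ancestors of `x`, up to the root of its tree. -/
noncomputable def pathSet (F : ParentForest V) (x : V) : Finset V :=
  Finset.univ.filter fun v => F.Anc v x

/-- The two paths starting at `p.1` and `p.2` intersect. -/
def Meets (F : ParentForest V) (p : V × V) : Prop :=
  (F.pathSet p.1 ∩ F.pathSet p.2).Nonempty

/-- `v` is the lowest common ancestor of `x` and `y` (their first intersection
vertex along the path from `x`). -/
def IsLCA (F : ParentForest V) (v x y : V) : Prop :=
  F.Anc v x ∧ F.Anc v y ∧ ∀ w, F.Anc w x → F.Anc w y → F.Anc w v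

/-- The influence of the outcome of the Two Path mechanism run on the sequence
of pairs of starting vertices `f 0, f 1, …`: at the first round `k` whose two
paths intersect, the first intersection vertex is selected if it was not marked
in any earlier (non-intersecting) round, and the outcome is its subtree size;
in all other cases (intersection at a marked vertex, or no round with
intersecting paths) the outcome contributes `0`. -/
noncomputable def outcomeVal (F : ParentForest V) (f : ℕ → V × V) : ℝ :=
  if h : ∃ k, F.Meets (f k) then
    ∑ v ∈ Finset.univ.filter (fun v =>
        F.IsLCA v (f (Nat.find h)).1 (f (Nat.find h)).2 ∧
        v ∉ (Finset.range (Nat.find h)).biUnion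
          (fun i => F.pathSet (f i).1 ∪ F.pathSet (f i).2)),
      (F.subSize v : ℝ)
  else 0

end ParentForest

namespace ParentForest

variable {V : Type*} [Fintype V]

variable (F : ParentForest V)

lemma anc_refl (v : V) : F.Anc v v := ⟨0, rfl⟩

lemma anc_trans {v w u : V} (h1 : F.Anc v w) (h2 : F.Anc w u) : F.Anc v u := by
  obtain ⟨a, ha⟩ := h1; obtain ⟨b, hb⟩ := h2
  exact ⟨a + b, by rw [Function.iterate_add_apply, hb, ha]⟩

noncomputable def rootOf (v : V) : V := F.parent^[(F.stab v).choose] v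

lemma parent_rootOf (v : V) : F.parent (F.rootOf v) = F.rootOf v := by
  have h := (F.stab v).choose_spec
  rw [rootOf]
  exact (Function.iterate_succ_apply' F.parent _ v) ▸ h

lemma anc_rootOf (v : V) : F.Anc (F.rootOf v) v := ⟨_, rfl⟩

lemma eq_of_fixed_iterates {v : V} {i j : ℕ}
    (hi : F.parent (F.parent^[i] v) = F.parent^[i] v)
    (hj : F.parent (F.parent^[j] v) = F.parent^[j] v) :
    F.parent^[i] v = F.parent^[j] v := by
  wlog h : i ≤ j generalizing i j
  · exact (this hj hi (le_of_not_ge h)).symm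
  obtain ⟨d, rfl⟩ := Nat.exists_eq_add_of_le h
  rw [add_comm i d, Function.iterate_add_apply]
  exact (Function.iterate_fixed hi d).symm

lemma rootOf_eq_of_anc {w v : V} (h : F.Anc w v) : F.rootOf w = F.rootOf v := by
  obtain ⟨b, hb⟩ := h
  have h1 : F.rootOf w = F.parent^[(F.stab w).choose + b] v := by
    rw [Function.iterate_add_apply, hb]; rfl
  have hfix1 : F.parent (F.parent^[(F.stab w).choose + b] v)
      = F.parent^[(F.stab w).choose + b] v := by
    rw [← h1]; exact F.parent_rootOf w
  have hfix2 : F.parent (F.parent^[(F.stab v).choose] v)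
      = F.parent^[(F.stab v).choose] v := F.parent_rootOf v
  rw [h1]
  exact F.eq_of_fixed_iterates hfix1 hfix2

lemma anc_antisymm {v w : V} (h1 : F.Anc v w) (h2 : F.Anc w v) : v = w := by
  obtain ⟨a, ha⟩ := h1; obtain ⟨b, hb⟩ := h2
  rcases Nat.eq_zero_or_pos (a + b) with h | h
  · have ha0 : a = 0 := by omega
    subst ha0; exact ha.symm
  · have hd : F.parent^[a + b] v = v := by
      rw [Function.iterate_add_apply, hb, ha]
    set c := (F.stab v).choose with hc
    have hroot : F.rootOf v = F.parent^[c] v := rfl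
    have hmul : F.parent^[(a + b) * c] v = v := by
      rw [Function.iterate_mul]
      exact Function.iterate_fixed hd c
    have hle : c ≤ (a + b) * c := Nat.le_mul_of_pos_left c h
    have hsplit : F.parent^[(a + b) * c] v = F.parent^[(a+b)*c - c] (F.parent^[c] v) := by
      rw [← Function.iterate_add_apply, Nat.sub_add_cancel hle]
    have hfix : F.parent^[(a+b)*c - c] (F.parent^[c] v) = F.parent^[c] v :=
      Function.iterate_fixed (F.parent_rootOf v) _
    have hvroot : v = F.rootOf v := by
      rw [hroot, ← hfix, ← hsplit, hmul]
    have hpv : F.parent v = v := by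
      conv_lhs => rw [hvroot]
      rw [F.parent_rootOf v, ← hvroot]
    rw [← hb, Function.iterate_fixed hpv b]

lemma anc_comparable {v w u : V} (h1 : F.Anc v u) (h2 : F.Anc w u) :
    F.Anc v w ∨ F.Anc w v := by
  obtain ⟨a, ha⟩ := h1; obtain ⟨b, hb⟩ := h2
  rcases le_total a b with h | h
  · right
    obtain ⟨d, rfl⟩ := Nat.exists_eq_add_of_le h
    exact ⟨d, by rw [← hb, add_comm a d, Function.iterate_add_apply, ha]⟩
  · left
    obtain ⟨d, rfl⟩ := Nat.exists_eq_add_of_le h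
    exact ⟨d, by rw [← ha, add_comm b d, Function.iterate_add_apply, hb]⟩

lemma subSize_mono {v w : V} (h : F.Anc v w) : F.subSize w ≤ F.subSize v := by
  apply Finset.card_le_card
  intro u hu
  rw [Finset.mem_filter] at hu ⊢
  exact ⟨hu.1, F.anc_trans h hu.2⟩

lemma subSize_pos (v : V) : 0 < F.subSize v :=
  Finset.card_pos.2 ⟨v, Finset.mem_filter.2 ⟨Finset.mem_univ v, F.anc_refl v⟩⟩

lemma subSize_le_card (v : V) : F.subSize v ≤ Fintype.card V := by
  rw [← Finset.card_univ]; exact Finset.card_filter_le _ _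

lemma mem_pathSet {v x : V} : v ∈ F.pathSet x ↔ F.Anc v x := by
  simp [pathSet]

lemma meets_iff_rootOf {p : V × V} : F.Meets p ↔ F.rootOf p.1 = F.rootOf p.2 := by
  constructor
  · rintro ⟨w, hw⟩
    rw [Finset.mem_inter, mem_pathSet, mem_pathSet] at hw
    rw [← F.rootOf_eq_of_anc hw.1, F.rootOf_eq_of_anc hw.2]
  · intro h
    exact ⟨F.rootOf p.1, Finset.mem_inter.2
      ⟨(F.mem_pathSet).2 (F.anc_rootOf p.1), (F.mem_pathSet).2 (h ▸ F.anc_rootOf p.2)⟩⟩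

lemma meets_diag (v : V) : F.Meets (v, v) :=
  ⟨v, Finset.mem_inter.2 ⟨(F.mem_pathSet).2 (F.anc_refl v), (F.mem_pathSet).2 (F.anc_refl v)⟩⟩

noncomputable def lcaOf (x y : V) : V :=
  if h : ∃ k, F.Anc (F.parent^[k] x) y then F.parent^[Nat.find h] x else x

lemma isLCA_lcaOf {x y : V} (hm : F.Meets (x, y)) : F.IsLCA (F.lcaOf x y) x y := by
  obtain ⟨w, hw⟩ := hm
  rw [Finset.mem_inter, mem_pathSet, mem_pathSet] at hw
  have hex : ∃ k, F.Anc (F.parent^[k] x) y := by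
    obtain ⟨a, ha⟩ := hw.1
    exact ⟨a, ha ▸ hw.2⟩
  rw [lcaOf, dif_pos hex]
  refine ⟨⟨Nat.find hex, rfl⟩, Nat.find_spec hex, ?_⟩
  intro u hux huy
  obtain ⟨a, ha⟩ := hux
  have hle : Nat.find hex ≤ a := Nat.find_min' hex (ha ▸ huy)
  exact ⟨a - Nat.find hex, by
    rw [← Function.iterate_add_apply, Nat.sub_add_cancel hle, ha]⟩

lemma isLCA_unique {v w x y : V} (h1 : F.IsLCA v x y) (h2 : F.IsLCA w x y) : v = w :=
  F.anc_antisymm (h2.2.2 v h1.1 h1.2.1) (h1.2.2 w h2.1 h2.2.1)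


lemma card_meets :
    ((Fintype.card V : ℝ))^2 ≤
      (F.roots.card : ℝ) * ((Finset.univ.filter fun p : V × V => F.Meets p).card : ℝ) := by
  classical
  set fib : V → Finset V := fun ρ => Finset.univ.filter (fun x => F.rootOf x = ρ) with hfib
  have hroot_mem : ∀ x : V, F.rootOf x ∈ F.roots := by
    intro x
    rw [roots, Finset.mem_filter]
    exact ⟨Finset.mem_univ _, F.parent_rootOf x⟩
  have hdisj : ∀ ρ₁ ∈ F.roots, ∀ ρ₂ ∈ F.roots, ρ₁ ≠ ρ₂ → Disjoint (fib ρ₁) (fib ρ₂) := by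
    intro ρ₁ _ ρ₂ _ hne
    rw [Finset.disjoint_left]
    intro x hx1 hx2
    rw [hfib, Finset.mem_filter] at hx1 hx2
    exact hne (hx1.2 ▸ hx2.2 ▸ rfl)
  have hMeq : (Finset.univ.filter fun p : V × V => F.Meets p)
      = F.roots.biUnion (fun ρ => fib ρ ×ˢ fib ρ) := by
    ext p
    rw [Finset.mem_filter, Finset.mem_biUnion]
    constructor
    · intro hm
      refine ⟨F.rootOf p.1, hroot_mem p.1, Finset.mem_product.2 ⟨?_, ?_⟩⟩
      · exact Finset.mem_filter.2 ⟨Finset.mem_univ _, rfl⟩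
      · exact Finset.mem_filter.2 ⟨Finset.mem_univ _, ((F.meets_iff_rootOf).1 hm.2).symm⟩
    · rintro ⟨ρ, _, hmem⟩
      obtain ⟨h1, h2⟩ := Finset.mem_product.1 hmem
      rw [Finset.mem_filter] at h1 h2
      exact ⟨Finset.mem_univ _, (F.meets_iff_rootOf).2 (h1.2.trans h2.2.symm)⟩
  have hdisjprod : ∀ ρ₁ ∈ F.roots, ∀ ρ₂ ∈ F.roots, ρ₁ ≠ ρ₂ →
      Disjoint (fib ρ₁ ×ˢ fib ρ₁) (fib ρ₂ ×ˢ fib ρ₂) :=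
    fun ρ₁ h1 ρ₂ h2 hne => Finset.disjoint_product.2 (Or.inl (hdisj ρ₁ h1 ρ₂ h2 hne))
  have hMcard : ((Finset.univ.filter fun p : V × V => F.Meets p).card : ℝ)
      = ∑ ρ ∈ F.roots, ((fib ρ).card : ℝ)^2 := by
    rw [hMeq, Finset.card_biUnion hdisjprod]
    push_cast
    refine Finset.sum_congr rfl (fun ρ _ => ?_)
    rw [Finset.card_product]
    push_cast
    ring
  have hncard : ((Fintype.card V : ℝ)) = ∑ ρ ∈ F.roots, ((fib ρ).card : ℝ) := by
    have huniv : (Finset.univ : Finset V) = F.roots.biUnion fib := by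
      ext x
      constructor
      · intro _
        rw [Finset.mem_biUnion]
        exact ⟨F.rootOf x, hroot_mem x, Finset.mem_filter.2 ⟨Finset.mem_univ x, rfl⟩⟩
      · intro _
        exact Finset.mem_univ x
    rw [← Finset.card_univ, huniv, Finset.card_biUnion hdisj]
    push_cast
    rfl
  rw [hMcard, hncard]
  exact sq_sum_le_card_mul_sum_sq

lemma disjoint_sub_of_L {T : ℝ} {ℓ₁ ℓ₂ : V}
    (h1 : (F.subSize ℓ₁ : ℝ) < T ∧ (F.parent ℓ₁ = ℓ₁ ∨ T ≤ (F.subSize (F.parent ℓ₁) : ℝ)))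
    (h2 : (F.subSize ℓ₂ : ℝ) < T ∧ (F.parent ℓ₂ = ℓ₂ ∨ T ≤ (F.subSize (F.parent ℓ₂) : ℝ)))
    (hne : ℓ₁ ≠ ℓ₂) {z : V} (hz1 : F.Anc ℓ₁ z) (hz2 : F.Anc ℓ₂ z) : False := by
  have key : ∀ a b : V, a ≠ b →
      (F.subSize a : ℝ) < T →
      (F.parent b = b ∨ T ≤ (F.subSize (F.parent b) : ℝ)) → F.Anc a b → False := by
    intro a b hab hlight hb hanc
    obtain ⟨k, hk⟩ := hanc
    rcases Nat.eq_zero_or_pos k with h0 | hpos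
    · subst h0; exact hab hk.symm
    rcases hb with hfix | hheavy
    · exact hab (by rw [← hk, Function.iterate_fixed hfix k])
    · have hanc' : F.Anc a (F.parent b) := by
        refine ⟨k - 1, ?_⟩
        have hh : F.parent^[k-1] (F.parent b) = F.parent^[k] b := by
          rw [← Function.iterate_succ_apply]
          congr 1
          omega
        rw [hh, hk]
      have hmono := F.subSize_mono hanc'
      have hcast : (F.subSize (F.parent b) : ℝ) ≤ (F.subSize a : ℝ) := by exact_mod_cast hmono
      linarith
  rcases F.anc_comparable hz1 hz2 with h | h
  · exact key ℓ₁ ℓ₂ hne h1.1 h2.2 h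
  · exact key ℓ₂ ℓ₁ hne.symm h2.1 h1.2 h

lemma card_light_pairs (T : ℝ) (hT : 0 ≤ T) :
    ((Finset.univ.filter fun p : V × V =>
        F.Meets p ∧ (F.subSize (F.lcaOf p.1 p.2) : ℝ) < T).card : ℝ)
      ≤ T * (Fintype.card V : ℝ) := by
  classical
  set L : Finset V := Finset.univ.filter
    (fun v => (F.subSize v : ℝ) < T ∧
      (F.parent v = v ∨ T ≤ (F.subSize (F.parent v) : ℝ))) with hL
  set sub : V → Finset V := fun ℓ => Finset.univ.filter (fun x => F.Anc ℓ x) with hsub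
  have hcover : (Finset.univ.filter fun p : V × V =>
      F.Meets p ∧ (F.subSize (F.lcaOf p.1 p.2) : ℝ) < T)
      ⊆ L.biUnion (fun ℓ => sub ℓ ×ˢ sub ℓ) := by
    intro p hp
    rw [Finset.mem_filter] at hp
    obtain ⟨-, hm, hlight⟩ := hp
    set u := F.lcaOf p.1 p.2 with hu
    have hlca : F.IsLCA u p.1 p.2 := F.isLCA_lcaOf hm
    have hex : ∃ ℓ : V, ℓ ∈ L ∧ F.Anc ℓ u := by
      by_cases hh : ∃ j, T ≤ (F.subSize (F.parent^[j] u) : ℝ)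
      · set j₀ := Nat.find hh with hj₀
        have hj₀pos : 0 < j₀ := by
          rcases Nat.eq_zero_or_pos j₀ with h0 | h
          · exfalso
            have hspec := Nat.find_spec hh
            rw [← hj₀, h0] at hspec
            simp only [Function.iterate_zero, id_eq] at hspec
            linarith
          · exact h
        refine ⟨F.parent^[j₀ - 1] u, ?_, ⟨j₀ - 1, rfl⟩⟩
        rw [hL, Finset.mem_filter]
        refine ⟨Finset.mem_univ _, ?_, Or.inr ?_⟩
        · have hmin := Nat.find_min hh (m := j₀ - 1) (by omega)
          push_neg at hmin
          exact hmin
        · have hstep : F.parent (F.parent^[j₀-1] u) = F.parent^[j₀] u := by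
            calc F.parent (F.parent^[j₀-1] u)
                = F.parent^[(j₀-1)+1] u := (Function.iterate_succ_apply' _ _ _).symm
              _ = F.parent^[j₀] u := by congr 1; omega
          rw [hstep]
          exact Nat.find_spec hh
      · push_neg at hh
        refine ⟨F.rootOf u, ?_, F.anc_rootOf u⟩
        rw [hL, Finset.mem_filter]
        exact ⟨Finset.mem_univ _, hh _, Or.inl (F.parent_rootOf u)⟩
    obtain ⟨ℓ, hℓL, hℓu⟩ := hex
    rw [Finset.mem_biUnion]
    refine ⟨ℓ, hℓL, Finset.mem_product.2 ⟨?_, ?_⟩⟩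
    · exact Finset.mem_filter.2 ⟨Finset.mem_univ _, F.anc_trans hℓu hlca.1⟩
    · exact Finset.mem_filter.2 ⟨Finset.mem_univ _, F.anc_trans hℓu hlca.2.1⟩
  have hsubcard : ∀ ℓ : V, (sub ℓ).card = F.subSize ℓ := fun ℓ => rfl
  have hcard1 : ((Finset.univ.filter fun p : V × V =>
      F.Meets p ∧ (F.subSize (F.lcaOf p.1 p.2) : ℝ) < T).card : ℝ)
      ≤ ∑ ℓ ∈ L, ((F.subSize ℓ : ℝ)) * ((F.subSize ℓ : ℝ)) := by
    calc ((Finset.univ.filter fun p : V × V =>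
        F.Meets p ∧ (F.subSize (F.lcaOf p.1 p.2) : ℝ) < T).card : ℝ)
        ≤ ((L.biUnion (fun ℓ => sub ℓ ×ˢ sub ℓ)).card : ℝ) := by
          exact_mod_cast Finset.card_le_card hcover
      _ ≤ ∑ ℓ ∈ L, (((sub ℓ ×ˢ sub ℓ).card : ℝ)) := by
          exact_mod_cast Finset.card_biUnion_le
      _ = ∑ ℓ ∈ L, ((F.subSize ℓ : ℝ)) * ((F.subSize ℓ : ℝ)) := by
          refine Finset.sum_congr rfl (fun ℓ _ => ?_)
          rw [Finset.card_product, hsubcard]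
          push_cast
          ring
  have hTlt : ∀ ℓ ∈ L, (F.subSize ℓ : ℝ) < T := by
    intro ℓ hℓ
    rw [hL, Finset.mem_filter] at hℓ
    exact hℓ.2.1
  have hcard2 : ∑ ℓ ∈ L, ((F.subSize ℓ : ℝ)) * ((F.subSize ℓ : ℝ))
      ≤ T * ∑ ℓ ∈ L, (F.subSize ℓ : ℝ) := by
    rw [Finset.mul_sum]
    refine Finset.sum_le_sum (fun ℓ hℓ => ?_)
    have h1 : (0:ℝ) ≤ (F.subSize ℓ : ℝ) := by positivity
    nlinarith [hTlt ℓ hℓ]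
  have hdisj : ∀ ℓ₁ ∈ L, ∀ ℓ₂ ∈ L, ℓ₁ ≠ ℓ₂ → Disjoint (sub ℓ₁) (sub ℓ₂) := by
    intro ℓ₁ h1 ℓ₂ h2 hne
    rw [Finset.disjoint_left]
    intro z hz1 hz2
    rw [hsub, Finset.mem_filter] at hz1 hz2
    rw [hL, Finset.mem_filter] at h1 h2
    exact F.disjoint_sub_of_L h1.2 h2.2 hne hz1.2 hz2.2
  have hcard3 : ∑ ℓ ∈ L, (F.subSize ℓ : ℝ) ≤ (Fintype.card V : ℝ) := by
    have h1 : ∑ ℓ ∈ L, F.subSize ℓ = (L.biUnion sub).card := by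
      rw [Finset.card_biUnion hdisj]
      exact Finset.sum_congr rfl (fun ℓ _ => (hsubcard ℓ).symm)
    have h2 : (L.biUnion sub).card ≤ Fintype.card V := by
      rw [← Finset.card_univ]
      exact Finset.card_le_card (Finset.subset_univ _)
    exact_mod_cast h1 ▸ h2
  calc ((Finset.univ.filter fun p : V × V =>
      F.Meets p ∧ (F.subSize (F.lcaOf p.1 p.2) : ℝ) < T).card : ℝ)
      ≤ T * ∑ ℓ ∈ L, (F.subSize ℓ : ℝ) := le_trans hcard1 hcard2
    _ ≤ T * (Fintype.card V : ℝ) := mul_le_mul_of_nonneg_left hcard3 hT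

lemma card_bad (v : V) :
    ((Finset.univ.filter fun p : V × V =>
        ¬(¬ F.Meets p ∧ v ∉ F.pathSet p.1 ∪ F.pathSet p.2)).card : ℝ)
      ≤ ((Finset.univ.filter fun p : V × V => F.Meets p).card : ℝ)
        + 2 * (F.subSize v : ℝ) * (Fintype.card V : ℝ) := by
  classical
  have hsubset : (Finset.univ.filter fun p : V × V =>
      ¬(¬ F.Meets p ∧ v ∉ F.pathSet p.1 ∪ F.pathSet p.2))
      ⊆ (Finset.univ.filter fun p : V × V => F.Meets p)
        ∪ ((Finset.univ.filter fun x : V => F.Anc v x) ×ˢ Finset.univ)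
        ∪ (Finset.univ ×ˢ (Finset.univ.filter fun x : V => F.Anc v x)) := by
    intro p hp
    rw [Finset.mem_filter] at hp
    have hp2 := hp.2
    push_neg at hp2
    rw [Finset.mem_union, Finset.mem_union]
    by_cases hm : F.Meets p
    · exact Or.inl (Or.inl (Finset.mem_filter.2 ⟨Finset.mem_univ _, hm⟩))
    · have hmem := hp2 hm
      rw [Finset.mem_union, mem_pathSet, mem_pathSet] at hmem
      rcases hmem with h | h
      · exact Or.inl (Or.inr (Finset.mem_product.2
          ⟨Finset.mem_filter.2 ⟨Finset.mem_univ _, h⟩, Finset.mem_univ _⟩))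
      · exact Or.inr (Finset.mem_product.2
          ⟨Finset.mem_univ _, Finset.mem_filter.2 ⟨Finset.mem_univ _, h⟩⟩)
  have hcard := Finset.card_le_card hsubset
  have hle := le_trans hcard (le_trans (Finset.card_union_le _ _)
    (Nat.add_le_add_right (Finset.card_union_le _ _) _))
  have hc1 : ((Finset.univ.filter fun x : V => F.Anc v x) ×ˢ
      (Finset.univ : Finset V)).card = F.subSize v * Fintype.card V := by
    rw [Finset.card_product, Finset.card_univ]
    rfl
  have hc2 : ((Finset.univ : Finset V) ×ˢ
      (Finset.univ.filter fun x : V => F.Anc v x)).card = Fintype.card V * F.subSize v := by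
    rw [Finset.card_product, Finset.card_univ]
    rfl
  rw [hc1, hc2] at hle
  have := (Nat.cast_le (α := ℝ)).2 hle
  push_cast at this
  linarith


lemma outcomeVal_nonneg (f : ℕ → V × V) : 0 ≤ F.outcomeVal f := by
  rw [outcomeVal]
  split
  · exact Finset.sum_nonneg (fun v _ => by positivity)
  · exact le_refl 0

lemma outcomeVal_le (f : ℕ → V × V) :
    F.outcomeVal f ≤ (Fintype.card V : ℝ) * (Fintype.card V : ℝ) := by
  rw [outcomeVal]
  have hcard : (0:ℝ) ≤ (Fintype.card V : ℝ) := by positivity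
  split
  · refine le_trans (le_trans (Finset.sum_le_sum
      (fun v _ => (Nat.cast_le (α := ℝ)).2 (F.subSize_le_card v)))
      (Finset.sum_le_sum_of_subset_of_nonneg (Finset.filter_subset _ _)
        (fun _ _ _ => hcard))) ?_
    rw [Finset.sum_const, Finset.card_univ, nsmul_eq_mul]
  · positivity

lemma outcomeVal_eq_of (f : ℕ → V × V) (k : ℕ) (hmeet : F.Meets (f k))
    (hprev : ∀ i < k, ¬ F.Meets (f i))
    (havoid : ∀ i < k,
      F.lcaOf (f k).1 (f k).2 ∉ F.pathSet (f i).1 ∪ F.pathSet (f i).2) :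
    F.outcomeVal f = (F.subSize (F.lcaOf (f k).1 (f k).2) : ℝ) := by
  have hex : ∃ j, F.Meets (f j) := ⟨k, hmeet⟩
  have hfind : Nat.find hex = k := by
    refine le_antisymm (Nat.find_min' hex hmeet) ?_
    by_contra hlt
    push_neg at hlt
    exact hprev _ hlt (Nat.find_spec hex)
  rw [outcomeVal, dif_pos hex, hfind]
  have hset : Finset.univ.filter (fun v =>
      F.IsLCA v (f k).1 (f k).2 ∧
      v ∉ (Finset.range k).biUnion
        (fun i => F.pathSet (f i).1 ∪ F.pathSet (f i).2))
      = {F.lcaOf (f k).1 (f k).2} := by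
    ext v
    rw [Finset.mem_filter, Finset.mem_singleton]
    constructor
    · rintro ⟨_, hlca, -⟩
      exact F.isLCA_unique hlca (F.isLCA_lcaOf hmeet)
    · rintro rfl
      refine ⟨Finset.mem_univ _, F.isLCA_lcaOf hmeet, ?_⟩
      rw [Finset.mem_biUnion]
      rintro ⟨i, hi, hmem⟩
      exact havoid i (Finset.mem_range.1 hi) hmem
  rw [hset, Finset.sum_singleton]

noncomputable def valAt (F : ParentForest V) (k : ℕ) (f : ℕ → V × V) : ℝ :=
  if (∀ i < k, ¬ F.Meets (f i)) ∧ F.Meets (f k) then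
    ∑ v ∈ Finset.univ.filter (fun v =>
        F.IsLCA v (f k).1 (f k).2 ∧
        v ∉ (Finset.range k).biUnion
          (fun i => F.pathSet (f i).1 ∪ F.pathSet (f i).2)),
      (F.subSize v : ℝ)
  else 0

lemma valAt_congr (k : ℕ) {f g : ℕ → V × V} (h : ∀ i ≤ k, f i = g i) :
    F.valAt k f = F.valAt k g := by
  have hfk : f k = g k := h k le_rfl
  have hcond : ((∀ i < k, ¬ F.Meets (f i)) ∧ F.Meets (f k))
      ↔ ((∀ i < k, ¬ F.Meets (g i)) ∧ F.Meets (g k)) := by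
    constructor
    · rintro ⟨h1, h2⟩
      exact ⟨fun i hi => (h i hi.le) ▸ h1 i hi, hfk ▸ h2⟩
    · rintro ⟨h1, h2⟩
      exact ⟨fun i hi => (h i hi.le) ▸ h1 i hi, hfk ▸ h2⟩
  rw [valAt, valAt]
  by_cases hc : (∀ i < k, ¬ F.Meets (f i)) ∧ F.Meets (f k)
  · rw [if_pos hc, if_pos (hcond.1 hc)]
    refine Finset.sum_congr ?_ (fun _ _ => rfl)
    ext v
    rw [Finset.mem_filter, Finset.mem_filter, hfk]
    constructor
    · rintro ⟨h1, h2, h3⟩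
      refine ⟨h1, h2, ?_⟩
      rw [Finset.mem_biUnion] at h3 ⊢
      rintro ⟨i, hi, hmem⟩
      exact h3 ⟨i, hi, (h i (Finset.mem_range.1 hi).le) ▸ hmem⟩
    · rintro ⟨h1, h2, h3⟩
      refine ⟨h1, h2, ?_⟩
      rw [Finset.mem_biUnion] at h3 ⊢
      rintro ⟨i, hi, hmem⟩
      exact h3 ⟨i, hi, (h i (Finset.mem_range.1 hi).le) ▸ hmem⟩
  · rw [if_neg hc, if_neg (fun hcg => hc (hcond.2 hcg))]

lemma valAt_eq_zero_of_ne (k : ℕ) (f : ℕ → V × V)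
    (h : ¬ ((∀ i < k, ¬ F.Meets (f i)) ∧ F.Meets (f k))) : F.valAt k f = 0 := by
  rw [valAt, if_neg h]

lemma tendsto_sum_valAt (f : ℕ → V × V) :
    Filter.Tendsto (fun K => ∑ k ∈ Finset.range K, F.valAt k f)
      Filter.atTop (nhds (F.outcomeVal f)) := by
  by_cases hex : ∃ k, F.Meets (f k)
  · set k₀ := Nat.find hex with hk₀
    have hconst : ∀ K ≥ k₀ + 1, ∑ k ∈ Finset.range K, F.valAt k f = F.outcomeVal f := by
      intro K hK
      have hmem : k₀ ∈ Finset.range K := Finset.mem_range.2 (by omega)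
      rw [Finset.sum_eq_single_of_mem k₀ hmem]
      · rw [valAt, if_pos ⟨fun i hi => Nat.find_min hex hi, Nat.find_spec hex⟩,
          outcomeVal, dif_pos hex]
      · intro k _ hkne
        apply F.valAt_eq_zero_of_ne
        rintro ⟨h1, h2⟩
        rcases lt_or_gt_of_ne hkne with h | h
        · exact Nat.find_min hex h h2
        · exact h1 k₀ h (Nat.find_spec hex)
    exact Filter.Tendsto.congr' (by
      filter_upwards [Filter.eventually_ge_atTop (k₀ + 1)] with K hK
      exact (hconst K hK).symm) tendsto_const_nhds
  · have h0 : F.outcomeVal f = 0 := by rw [outcomeVal, dif_neg hex]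
    push_neg at hex
    have : ∀ K, ∑ k ∈ Finset.range K, F.valAt k f = 0 := by
      intro K
      refine Finset.sum_eq_zero (fun k _ => ?_)
      exact F.valAt_eq_zero_of_ne k f (fun hc => hex k hc.2)
    rw [h0]
    exact Filter.Tendsto.congr (fun K => (this K).symm) tendsto_const_nhds

lemma measurable_valAt_comp {Ω : Type*} [MeasurableSpace Ω] (k : ℕ) (Y : ℕ → Ω → V × V)
    (hY : ∀ i, @Measurable _ _ _ ⊤ (Y i)) :
    Measurable fun ω => F.valAt k (fun i => Y i ω) := by
  letI : MeasurableSpace (V × V) := ⊤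
  haveI : MeasurableSingletonClass (V × V) := ⟨fun _ => trivial⟩
  have hΦ : Measurable fun ω => (fun i : Fin (k+1) => Y i ω) :=
    measurable_pi_lambda _ (fun i => hY i)
  have hfact : (fun ω => F.valAt k fun i => Y i ω)
      = (fun t : Fin (k+1) → V × V =>
          F.valAt k (fun i => if h : i < k+1 then t ⟨i, h⟩ else t 0))
        ∘ (fun ω (i : Fin (k+1)) => Y i ω) := by
    funext ω
    simp only [Function.comp_apply]
    refine F.valAt_congr k (fun i hi => ?_)
    rw [dif_pos (by omega : i < k + 1)]
  rw [hfact]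
  exact (measurable_of_countable _).comp hΦ

end ParentForest

set_option maxHeartbeats 4000000 in
/-- For a directed forest with `n` vertices and `s` roots, the Two Path
mechanism (driven by an i.i.d. sequence of uniformly random pairs of starting
vertices) selects a vertex of expected influence at least `0.09 · n / s`. -/
theorem two_path_forest_expectation {V : Type*} [Fintype V] [Nonempty V]
    (F : ParentForest V) {Ω : Type*} [MeasurableSpace Ω] (μ : Measure Ω)
    [IsProbabilityMeasure μ] (X : ℕ → Ω → V × V)
    (hindep : ProbabilityTheory.iIndepFun
      (m := fun _ => (⊤ : MeasurableSpace (V × V))) X μ)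
    (hunif : ∀ i, ∀ p : V × V,
      μ {ω | X i ω = p} = 1 / (Fintype.card (V × V) : ENNReal)) :
    (0.09 : ℝ) * (Fintype.card V : ℝ) / (F.roots.card : ℝ) ≤
      ∫ ω, F.outcomeVal (fun i => X i ω) ∂μ := by
  classical
  letI : MeasurableSpace (V × V) := ⊤
  haveI : MeasurableSingletonClass (V × V) := ⟨fun _ => trivial⟩
  set n : ℕ := Fintype.card V with hn
  set N : ℕ := Fintype.card (V × V) with hNdef
  have hNn : N = n * n := by rw [hNdef, hn]; exact Fintype.card_prod V V
  have hnpos : 0 < n := Fintype.card_pos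
  have hNpos : 0 < N := by rw [hNn]; positivity
  have hNne : (N : ENNReal) ≠ 0 := by
    simp only [ne_eq, Nat.cast_eq_zero]
    omega
  have hNtop : (N : ENNReal) ≠ ⊤ := ENNReal.natCast_ne_top N
  -- singletons are null measurable
  have hnull : ∀ i (p : V × V), NullMeasurableSet {ω | X i ω = p} μ := by
    intro i p
    set B : V × V → Set Ω := fun q => MeasureTheory.toMeasurable μ {ω | X i ω = q} with hB
    have hBmeas : ∀ q, MeasurableSet (B q) := fun q => measurableSet_toMeasurable μ _
    have hBsub : ∀ q, {ω | X i ω = q} ⊆ B q := fun q => subset_toMeasurable μ _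
    have hBμ : ∀ q, μ (B q) = 1 / N := by
      intro q
      show μ (MeasureTheory.toMeasurable μ {ω | X i ω = q}) = 1 / N
      rw [measure_toMeasurable]
      exact hunif i q
    set U : Set Ω := ⋃ q ∈ (Finset.univ.erase p : Finset (V × V)), B q with hU
    have hUmeas : MeasurableSet U :=
      Finset.measurableSet_biUnion _ (fun q _ => hBmeas q)
    have hUμ : μ U ≤ ((N - 1 : ℕ) : ENNReal) / N := by
      refine le_trans (measure_biUnion_finset_le _ _) ?_
      rw [Finset.sum_congr rfl (fun q _ => hBμ q), Finset.sum_const,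
        Finset.card_erase_of_mem (Finset.mem_univ p), Finset.card_univ, nsmul_eq_mul,
        mul_one_div]
    have hcover : B p ∪ U = Set.univ := by
      ext ω
      simp only [Set.mem_union, Set.mem_univ, iff_true]
      by_cases hq : X i ω = p
      · exact Or.inl (hBsub p hq)
      · refine Or.inr ?_
        rw [hU]
        refine Set.mem_biUnion (Finset.mem_coe.2 (Finset.mem_erase.2 ⟨hq, Finset.mem_univ _⟩)) ?_
        exact hBsub _ rfl
    have hinter : μ (B p ∩ U) = 0 := by
      have h1 := measure_union_add_inter' (μ := μ) (hBmeas p) U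
      rw [hcover, measure_univ] at h1
      have h2 : (1 : ENNReal) + μ (B p ∩ U) ≤ 1 := by
        rw [h1, hBμ p]
        calc 1 / (N:ENNReal) + μ U ≤ 1 / N + ((N-1:ℕ):ENNReal)/N := by
              exact add_le_add_right hUμ _
          _ = 1 := by
              rw [ENNReal.div_add_div_same]
              have : (1 : ENNReal) + ((N-1:ℕ):ENNReal) = (N:ℕ) := by
                rw [← Nat.cast_one, ← Nat.cast_add]
                congr 1
                omega
              rw [this, ENNReal.div_self hNne hNtop]
      have h2' : (1 : ENNReal) + μ (B p ∩ U) ≤ 1 + 0 := by simpa using h2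
      have h3 : μ (B p ∩ U) ≤ 0 :=
        (ENNReal.add_le_add_iff_left (ENNReal.one_ne_top)).1 h2'
      exact le_antisymm h3 (by positivity)
    have hdiffnull : μ (B p \ {ω | X i ω = p}) = 0 := by
      refine measure_mono_null ?_ hinter
      intro ω hω
      refine ⟨hω.1, ?_⟩
      rw [hU]
      have hne : X i ω ≠ p := hω.2
      refine Set.mem_biUnion (Finset.mem_coe.2 (Finset.mem_erase.2 ⟨hne, Finset.mem_univ _⟩)) ?_
      exact hBsub _ rfl
    have heq : {ω | X i ω = p} = B p \ (B p \ {ω | X i ω = p}) := by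
      ext ω
      simp only [Set.mem_diff, Set.mem_setOf_eq, not_and, not_not]
      constructor
      · intro h
        exact ⟨hBsub p h, fun _ => h⟩
      · rintro ⟨h1, h2⟩
        exact h2 h1
    rw [heq]
    exact ((hBmeas p).nullMeasurableSet).diff (NullMeasurableSet.of_null hdiffnull)
  -- measure of finite preimages
  have hfin : ∀ i (A : Finset (V × V)), μ {ω | X i ω ∈ A} = (A.card : ENNReal) / N := by
    intro i A
    have hdecomp : {ω | X i ω ∈ A} = ⋃ q ∈ A, {ω | X i ω = q} := by
      ext ω
      simp only [Set.mem_setOf_eq, Set.mem_iUnion, exists_prop]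
      constructor
      · intro h
        exact ⟨X i ω, h, rfl⟩
      · rintro ⟨q, hq, rfl⟩
        exact hq
    rw [hdecomp, measure_biUnion_finset₀ ?_ (fun q _ => hnull i q)]
    · rw [Finset.sum_congr rfl (fun q _ => hunif i q), Finset.sum_const, nsmul_eq_mul,
        mul_one_div]
    · intro q hq q' hq' hne
      refine Disjoint.aedisjoint (Set.disjoint_left.2 ?_)
      intro ω h1 h2
      exact hne (h1 ▸ h2 ▸ rfl)
  -- a.e. measurable versions
  have hnm : ∀ i, NullMeasurable (X i) μ := by
    intro i s _
    have hdecomp : X i ⁻¹' s = ⋃ q ∈ s, {ω | X i ω = q} := by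
      ext ω
      simp only [Set.mem_preimage, Set.mem_iUnion, Set.mem_setOf_eq, exists_prop]
      constructor
      · intro h
        exact ⟨X i ω, h, rfl⟩
      · rintro ⟨q, hq, rfl⟩
        exact hq
    rw [hdecomp]
    exact NullMeasurableSet.biUnion (Set.to_countable s) (fun q _ => hnull i q)
  have hAEM : ∀ i, AEMeasurable (X i) μ := fun i => (hnm i).aemeasurable
  set Y : ℕ → Ω → V × V := fun i => (hAEM i).mk (X i) with hYdef
  have hYmeas : ∀ i, Measurable (Y i) := fun i => (hAEM i).measurable_mk
  have hYae : ∀ᵐ ω ∂μ, ∀ i, X i ω = Y i ω := ae_all_iff.2 (fun i => (hAEM i).ae_eq_mk)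
  -- measurable version of the outcome and integrability
  set g : Ω → ℝ := fun ω => F.outcomeVal (fun i => Y i ω) with hgdef
  have hgmeas : Measurable g := by
    apply measurable_of_tendsto_metrizable
      (f := fun K ω => ∑ k ∈ Finset.range K, F.valAt k (fun i => Y i ω))
    · intro K
      exact Finset.measurable_sum _ (fun k _ => F.measurable_valAt_comp k Y hYmeas)
    · rw [tendsto_pi_nhds]
      intro ω
      exact F.tendsto_sum_valAt _
  have haeeq : (fun ω => F.outcomeVal (fun i => X i ω)) =ᵐ[μ] g := by
    filter_upwards [hYae] with ω hω
    have : (fun i => X i ω) = (fun i => Y i ω) := funext hω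
    rw [hgdef, this]
  have hInt : Integrable (fun ω => F.outcomeVal (fun i => X i ω)) μ := by
    refine ⟨hgmeas.aestronglyMeasurable.congr haeeq.symm, ?_⟩
    apply HasFiniteIntegral.of_bounded (C := (n : ℝ) * n)
    refine Filter.Eventually.of_forall (fun ω => ?_)
    rw [Real.norm_eq_abs, abs_of_nonneg (F.outcomeVal_nonneg _)]
    exact F.outcomeVal_le _
  -- combinatorial data
  set Mset : Finset (V × V) := Finset.univ.filter (fun p => F.Meets p) with hMset
  set M : ℕ := Mset.card with hM
  have hMpos : 0 < M := by
    refine Finset.card_pos.2 ⟨(Classical.arbitrary V, Classical.arbitrary V), ?_⟩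
    exact Finset.mem_filter.2 ⟨Finset.mem_univ _, F.meets_diag _⟩
  set T : ℝ := M / (2 * n) with hT
  have hTpos : 0 < T := by
    rw [hT]
    have h1 : (0:ℝ) < M := by exact_mod_cast hMpos
    have h2 : (0:ℝ) < n := by exact_mod_cast hnpos
    positivity
  set Hset : Finset (V × V) := Finset.univ.filter
    (fun p => F.Meets p ∧ T ≤ (F.subSize (F.lcaOf p.1 p.2) : ℝ)) with hHset
  have hHcard : (M : ℝ) - T * n ≤ Hset.card := by
    have hsplit : (Mset.filter (fun p : V × V =>
        T ≤ (F.subSize (F.lcaOf p.1 p.2) : ℝ))).card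
        + (Mset.filter (fun p : V × V =>
          ¬ T ≤ (F.subSize (F.lcaOf p.1 p.2) : ℝ))).card = M := by
      rw [hM]
      exact Finset.card_filter_add_card_filter_not _
    have he1 : Mset.filter (fun p : V × V =>
        T ≤ (F.subSize (F.lcaOf p.1 p.2) : ℝ)) = Hset := by
      rw [hMset, hHset, Finset.filter_filter]
    have he2 : Mset.filter (fun p : V × V =>
        ¬ T ≤ (F.subSize (F.lcaOf p.1 p.2) : ℝ))
        = Finset.univ.filter (fun p : V × V =>
          F.Meets p ∧ (F.subSize (F.lcaOf p.1 p.2) : ℝ) < T) := by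
      rw [hMset, Finset.filter_filter]
      refine Finset.filter_congr (fun p _ => ?_)
      rw [not_le]
    have hlight := F.card_light_pairs T hTpos.le
    rw [← he2] at hlight
    rw [he1] at hsplit
    have : ((Mset.filter (fun p : V × V =>
        ¬ T ≤ (F.subSize (F.lcaOf p.1 p.2) : ℝ))).card : ℝ) ≤ T * n := by
      rw [hn]
      exact hlight
    have hcast : (Hset.card : ℝ) + ((Mset.filter (fun p : V × V =>
        ¬ T ≤ (F.subSize (F.lcaOf p.1 p.2) : ℝ))).card : ℝ) = M := by
      exact_mod_cast congrArg (Nat.cast : ℕ → ℝ) hsplit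
    linarith
  -- the avoid sets
  set A : V → Finset (V × V) := fun v => Finset.univ.filter
    (fun q => ¬ F.Meets q ∧ v ∉ F.pathSet q.1 ∪ F.pathSet q.2) with hA
  set r : V → ℝ := fun v => ((A v).card : ℝ) / N with hr
  have hr0 : ∀ v, 0 ≤ r v := by
    intro v
    rw [hr]
    positivity
  have hrlt : ∀ v, r v < 1 := by
    intro v
    have hsub : A v ⊆ Finset.univ \ Mset := by
      intro q hq
      rw [hA, Finset.mem_filter] at hq
      rw [Finset.mem_sdiff]
      refine ⟨Finset.mem_univ _, ?_⟩
      rw [hMset, Finset.mem_filter]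
      rintro ⟨-, hm⟩
      exact hq.2.1 hm
    have hle : (A v).card ≤ N - M := by
      refine le_trans (Finset.card_le_card hsub) ?_
      rw [Finset.card_sdiff_of_subset (Finset.filter_subset _ _), Finset.card_univ]
    have hlt : (A v).card < N := by omega
    rw [hr, div_lt_one (by exact_mod_cast hNpos)]
    exact_mod_cast hlt
  have hbound : ∀ v, (N : ℝ) * (1 - r v) ≤ M + 2 * (F.subSize v : ℝ) * n := by
    intro v
    have hcompl : (A v).card + (Finset.univ.filter (fun q : V × V =>
        ¬(¬ F.Meets q ∧ v ∉ F.pathSet q.1 ∪ F.pathSet q.2))).card = N := by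
      rw [hA]
      rw [Finset.card_filter_add_card_filter_not]
      rfl
    have hbad := F.card_bad v
    have heq1 : (N : ℝ) * (1 - r v) = (N : ℝ) - (A v).card := by
      rw [hr]
      field_simp
    rw [heq1]
    have hc : ((Finset.univ.filter (fun q : V × V =>
        ¬(¬ F.Meets q ∧ v ∉ F.pathSet q.1 ∪ F.pathSet q.2))).card : ℝ)
        = (N : ℝ) - (A v).card := by
      have := congrArg (Nat.cast : ℕ → ℝ) hcompl
      push_cast at this
      linarith
    rw [← hc]
    rw [hM, hMset, hn]
    exact hbad
  -- events
  set G : ℕ → (V × V) → Set Ω := fun k p =>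
    (⋂ i ∈ Finset.range k, (Y i) ⁻¹' ((A (F.lcaOf p.1 p.2) : Finset (V × V)) : Set (V × V)))
      ∩ (Y k) ⁻¹' {p} with hG
  have hGmeas : ∀ k p, MeasurableSet (G k p) := by
    intro k p
    refine MeasurableSet.inter ?_ ((hYmeas k) MeasurableSpace.measurableSet_top)
    exact Finset.measurableSet_biInter _ (fun i _ => (hYmeas i) MeasurableSpace.measurableSet_top)
  set GX : ℕ → (V × V) → Set Ω := fun k p =>
    (⋂ i ∈ Finset.range k, (X i) ⁻¹' ((A (F.lcaOf p.1 p.2) : Finset (V × V)) : Set (V × V)))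
      ∩ (X k) ⁻¹' {p} with hGX
  have hGae : ∀ k p, μ (G k p) = μ (GX k p) := by
    intro k p
    apply measure_congr
    rw [Filter.eventuallyEq_set]
    filter_upwards [hYae] with ω hω
    simp only [hG, hGX, Set.mem_inter_iff, Set.mem_iInter, Set.mem_preimage,
      Set.mem_singleton_iff]
    constructor
    · rintro ⟨h1, h2⟩
      exact ⟨fun i hi => by rw [hω i]; exact h1 i hi, by rw [hω k]; exact h2⟩
    · rintro ⟨h1, h2⟩
      exact ⟨fun i hi => by rw [← hω i]; exact h1 i hi, by rw [← hω k]; exact h2⟩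
  have hGXμ : ∀ k p, μ (GX k p)
      = (((A (F.lcaOf p.1 p.2)).card : ENNReal) / N)^k * (1 / N) := by
    intro k p
    set v := F.lcaOf p.1 p.2 with hv
    set sets : ℕ → Set (V × V) := fun i =>
      if i = k then {p} else ((A v : Finset (V × V)) : Set (V × V)) with hsets
    have hrewrite : GX k p = ⋂ i ∈ Finset.range (k+1), X i ⁻¹' sets i := by
      ext ω
      simp only [hGX, Set.mem_inter_iff, Set.mem_iInter, Set.mem_preimage,
        Set.mem_singleton_iff, Finset.mem_range, hsets]
      constructor
      · rintro ⟨h1, h2⟩ i hik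
        by_cases hi : i = k
        · subst hi
          rw [if_pos rfl]
          exact h2
        · rw [if_neg hi]
          exact h1 i (by omega)
      · intro hmem
        refine ⟨fun i hik => ?_, ?_⟩
        · have := hmem i (by omega)
          rwa [if_neg (by omega)] at this
        · have := hmem k (by omega)
          rwa [if_pos rfl] at this
    rw [hrewrite, hindep.measure_inter_preimage_eq_mul (Finset.range (k+1))
      (fun i _ => MeasurableSpace.measurableSet_top)]
    rw [Finset.range_add_one, Finset.prod_insert Finset.notMem_range_self]
    have h1 : μ (X k ⁻¹' sets k) = 1 / N := by
      have hsk : sets k = {p} := by rw [hsets]; simp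
      have hpre : X k ⁻¹' ({p} : Set (V × V)) = {ω | X k ω = p} := by
        ext ω
        simp [Set.mem_preimage]
      rw [hsk, hpre]
      exact hunif k p
    have h2 : ∀ i ∈ Finset.range k, μ (X i ⁻¹' sets i)
        = ((A v).card : ENNReal) / N := by
      intro i hi
      have hine : i ≠ k := by
        have := Finset.mem_range.1 hi
        omega
      rw [hsets]
      simp only [if_neg hine]
      have : X i ⁻¹' ((A v : Finset (V × V)) : Set (V × V)) = {ω | X i ω ∈ A v} := by
        ext ω
        simp [Set.mem_preimage]
      rw [this]
      exact hfin i (A v)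
    rw [h1, Finset.prod_congr rfl h2, Finset.prod_const, Finset.card_range]
    ring
  have hGtoReal : ∀ k p, (μ (G k p)).toReal
      = (1 / (N:ℝ)) * (r (F.lcaOf p.1 p.2))^k := by
    intro k p
    rw [hGae, hGXμ]
    rw [ENNReal.toReal_mul, ENNReal.toReal_pow, ENNReal.toReal_div, ENNReal.toReal_div]
    simp only [ENNReal.toReal_natCast, ENNReal.toReal_one, hr]
    ring
  -- value function on pairs
  set t : (V × V) → ℝ := fun p => (F.subSize (F.lcaOf p.1 p.2) : ℝ) with ht
  -- integral of lower bound
  have hLKint : ∀ K : ℕ, ∫ ω, (∑ z ∈ Hset ×ˢ Finset.range K,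
      Set.indicator (G z.2 z.1) (fun _ => t z.1) ω) ∂μ
      = ∑ z ∈ Hset ×ˢ Finset.range K, t z.1 * (μ (G z.2 z.1)).toReal := by
    intro K
    rw [integral_finset_sum]
    · refine Finset.sum_congr rfl (fun z _ => ?_)
      rw [integral_indicator_const _ (hGmeas _ _), smul_eq_mul]
      rw [measureReal_def]
      ring
    · intro z _
      exact (integrable_const _).indicator (hGmeas _ _)
  -- pointwise comparison
  have hptwise : ∀ K : ℕ, ∀ᵐ ω ∂μ, (∑ z ∈ Hset ×ˢ Finset.range K,
      Set.indicator (G z.2 z.1) (fun _ => t z.1) ω)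
      ≤ F.outcomeVal (fun i => X i ω) := by
    intro K
    filter_upwards [hYae] with ω hω
    by_cases hexz : ∃ z ∈ Hset ×ˢ Finset.range K, ω ∈ G z.2 z.1
    · obtain ⟨⟨p, k⟩, hzmem, hωG⟩ := hexz
      obtain ⟨hpH, hkK⟩ := Finset.mem_product.1 hzmem
      have hωG' := hωG
      rw [hG] at hωG'
      obtain ⟨h1, h2⟩ := hωG'
      rw [Set.mem_preimage, Set.mem_singleton_iff] at h2
      have hXk : X k ω = p := by rw [hω k]; exact h2
      have hXi : ∀ i < k, X i ω ∈ A (F.lcaOf p.1 p.2) := by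
        intro i hi
        have := Set.mem_iInter₂.1 h1 i (Finset.mem_range.2 hi)
        rw [Set.mem_preimage] at this
        rw [hω i]
        exact Finset.mem_coe.1 this
      rw [hHset, Finset.mem_filter] at hpH
      have hAprop : ∀ i < k, ¬ F.Meets (X i ω) ∧
          F.lcaOf p.1 p.2 ∉ F.pathSet (X i ω).1 ∪ F.pathSet (X i ω).2 := by
        intro i hi
        have := hXi i hi
        rw [hA, Finset.mem_filter] at this
        exact this.2
      have houtcome : F.outcomeVal (fun i => X i ω) = t p := by
        have hmeet : F.Meets ((fun i => X i ω) k) := by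
          show F.Meets (X k ω)
          rw [hXk]
          exact hpH.2.1
        have heqlca : F.lcaOf (X k ω).1 (X k ω).2 = F.lcaOf p.1 p.2 := by rw [hXk]
        rw [F.outcomeVal_eq_of _ k hmeet (fun i hi => (hAprop i hi).1)
          (fun i hi => heqlca ▸ (hAprop i hi).2)]
        rw [ht, heqlca]
      rw [houtcome]
      have hsum : (∑ z ∈ Hset ×ˢ Finset.range K,
          Set.indicator (G z.2 z.1) (fun _ => t z.1) ω) = t p := by
        rw [Finset.sum_eq_single_of_mem (p, k) hzmem]
        · rw [Set.indicator_of_mem hωG]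
        · rintro ⟨p', k'⟩ hz' hne
          refine Set.indicator_of_notMem ?_ _
          intro hmem'
          rw [hG] at hmem'
          obtain ⟨h1', h2'⟩ := hmem'
          rw [Set.mem_preimage, Set.mem_singleton_iff] at h2'
          obtain ⟨hp'H, hk'K⟩ := Finset.mem_product.1 hz'
          rw [hHset, Finset.mem_filter] at hp'H
          rcases lt_trichotomy k' k with hlt | heq | hgt
          · -- Y k' ω = p' meets, but X k' ω ∈ A: not meets
            have hXk' : X k' ω = p' := by rw [hω k']; exact h2'
            have := (hAprop k' hlt).1
            rw [hXk'] at this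
            exact this hp'H.2.1
          · subst heq
            have a1 : Y k' ω = p' := h2'
            have a2 : Y k' ω = p := h2
            have hpp : p' = p := by rw [← a1, ← a2]
            exact hne (by rw [hpp])
          · -- from G k' p' : Y k ω ∈ A v', but Y k ω = p meets
            have := Set.mem_iInter₂.1 h1' k (Finset.mem_range.2 hgt)
            rw [Set.mem_preimage] at this
            have hmemA : p ∈ A (F.lcaOf p'.1 p'.2) := by
              have a2 : Y k ω = p := h2
              have a3 : Y k ω ∈ A (F.lcaOf p'.1 p'.2) := Finset.mem_coe.1 this
              rwa [a2] at a3
            rw [hA, Finset.mem_filter] at hmemA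
            exact hmemA.2.1 hpH.2.1
      rw [hsum]
    · push_neg at hexz
      have hzero : (∑ z ∈ Hset ×ˢ Finset.range K,
          Set.indicator (G z.2 z.1) (fun _ => t z.1) ω) = 0 :=
        Finset.sum_eq_zero (fun z hz => Set.indicator_of_notMem (hexz z hz) _)
      rw [hzero]
      exact F.outcomeVal_nonneg _
  have hIntLe : ∀ K : ℕ, ∑ z ∈ Hset ×ˢ Finset.range K, t z.1 * (μ (G z.2 z.1)).toReal
      ≤ ∫ ω, F.outcomeVal (fun i => X i ω) ∂μ := by
    intro K
    rw [← hLKint K]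
    refine integral_mono_ae ?_ hInt (hptwise K)
    exact integrable_finset_sum _ (fun z _ => (integrable_const _).indicator (hGmeas _ _))
  -- reorganize and take the limit
  have hform : ∀ K : ℕ, ∑ z ∈ Hset ×ˢ Finset.range K, t z.1 * (μ (G z.2 z.1)).toReal
      = ∑ p ∈ Hset, (t p * (1/(N:ℝ)))
          * (∑ k ∈ Finset.range K, (r (F.lcaOf p.1 p.2))^k) := by
    intro K
    rw [Finset.sum_product]
    refine Finset.sum_congr rfl (fun p _ => ?_)
    rw [Finset.mul_sum]
    refine Finset.sum_congr rfl (fun k _ => ?_)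
    rw [hGtoReal]
    ring
  set b : ℝ := ∑ p ∈ Hset, (t p * (1/(N:ℝ))) * (1 - r (F.lcaOf p.1 p.2))⁻¹ with hb
  have htends : Filter.Tendsto (fun K => ∑ p ∈ Hset, (t p * (1/(N:ℝ)))
      * (∑ k ∈ Finset.range K, (r (F.lcaOf p.1 p.2))^k)) Filter.atTop (nhds b) := by
    rw [hb]
    refine tendsto_finset_sum _ (fun p _ => Filter.Tendsto.const_mul _ ?_)
    exact (hasSum_geometric_of_lt_one (hr0 _) (hrlt _)).tendsto_sum_nat
  have hble : b ≤ ∫ ω, F.outcomeVal (fun i => X i ω) ∂μ := by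
    refine le_of_tendsto htends (Filter.Eventually.of_forall (fun K => ?_))
    rw [← hform K]
    exact hIntLe K
  -- final arithmetic
  have hterm : ∀ p ∈ Hset, (1 : ℝ)/(4*n)
      ≤ (t p * (1/(N:ℝ))) * (1 - r (F.lcaOf p.1 p.2))⁻¹ := by
    intro p hp
    set v := F.lcaOf p.1 p.2 with hv
    have h1r : 0 < 1 - r v := by linarith [hrlt v]
    have hNb : (N : ℝ) * (1 - r v) ≤ M + 2 * t p * n := by
      have := hbound v
      rw [ht]
      exact this
    have htp : T ≤ t p := by
      rw [hHset, Finset.mem_filter] at hp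
      exact hp.2.2
    have htppos : 0 < t p := lt_of_lt_of_le hTpos htp
    have hnR : (0:ℝ) < n := by exact_mod_cast hnpos
    have hNR : (0:ℝ) < N := by exact_mod_cast hNpos
    have hMR : (0:ℝ) < M := by exact_mod_cast hMpos
    have hdenompos : (0:ℝ) < (N : ℝ) * (1 - r v) := by positivity
    have heq : (t p * (1/(N:ℝ))) * (1 - r v)⁻¹ = t p / ((N : ℝ) * (1 - r v)) := by
      field_simp
    rw [heq]
    have hstep1 : t p / ((M:ℝ) + 2 * t p * n) ≤ t p / ((N : ℝ) * (1 - r v)) := by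
      apply div_le_div_of_nonneg_left htppos.le hdenompos hNb
    refine le_trans ?_ hstep1
    rw [div_le_div_iff₀ (by positivity) (by positivity)]
    have h2nT : 2 * (n:ℝ) * T = M := by
      rw [hT]
      field_simp
    nlinarith [htp, hnR, htppos]
  have hbge : (Hset.card : ℝ) * (1/(4*(n:ℝ))) ≤ b := by
    rw [hb]
    have := Finset.sum_le_sum hterm
    rw [Finset.sum_const, nsmul_eq_mul] at this
    exact this
  -- put everything together
  set s : ℝ := (F.roots.card : ℝ) with hs
  have hspos : (0:ℝ) < s := by
    rw [hs]
    have : F.roots.Nonempty := by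
      refine ⟨F.rootOf (Classical.arbitrary V), ?_⟩
      rw [ParentForest.roots, Finset.mem_filter]
      exact ⟨Finset.mem_univ _, F.parent_rootOf _⟩
    exact_mod_cast Finset.card_pos.2 this
  have hCS : ((n:ℝ))^2 ≤ s * M := by
    have := F.card_meets
    rw [← hn, ← hs, ← hMset, ← hM] at this
    exact this
  have hnR : (0:ℝ) < n := by exact_mod_cast hnpos
  have hMR : (0:ℝ) < M := by exact_mod_cast hMpos
  have hTn : T * n = M / 2 := by
    rw [hT]
    field_simp
  -- |H| ≥ M/2
  have hH2 : (M : ℝ) / 2 ≤ Hset.card := by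
    have hx := hHcard
    rw [hTn] at hx
    linarith
  have hfinal : (0.09 : ℝ) * n / s ≤ b := by
    have hb1 : (M:ℝ)/2 * (1/(4*n)) ≤ b := by
      refine le_trans ?_ hbge
      apply mul_le_mul_of_nonneg_right hH2
      positivity
    have hb2 : (M:ℝ)/2 * (1/(4*(n:ℝ))) = (M:ℝ)/(8*(n:ℝ)) := by
      rw [div_mul_div_comm, mul_one]
      congr 1
      ring
    rw [div_le_iff₀ hspos]
    rw [hb2] at hb1
    have h3 : (0.09:ℝ) * n ≤ (M:ℝ)/(8*n) * s := by
      rw [div_mul_eq_mul_div, le_div_iff₀ (by positivity)]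
      nlinarith [hCS]
    calc (0.09:ℝ) * n ≤ (M:ℝ)/(8*n) * s := h3
      _ ≤ b * s := by
          apply mul_le_mul_of_nonneg_right _ hspos.le
          linarith
  calc (0.09 : ℝ) * (Fintype.card V : ℝ) / (F.roots.card : ℝ) = 0.09 * n / s := by rw [← hn, ← hs]
    _ ≤ b := hfinal
    _ ≤ _ := hble
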